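/- Let Λ be a σ-finite measure on 𝒫 satisfying conditions (1.4) and (1.5). Then for every b > 1, ∫_{{x ∈ 𝒫 : ⟨x,e_θ⟩ > b}} ⟨x,e_θ⟩ Λ(dx) < ∞; in other words, the measure Λ̂(dx) = ⟨x,e_θ⟩ Λ(dx) satisfies Λ̂({⟨x,e_θ⟩ > b}) < ∞ for every b > 1. -/

import Mathlib

open MeasureTheory ENNReal Filter

noncomputable section

/-- The space `𝒫` of nonincreasing sequences in `[-∞, ∞)` tending to `-∞`,
equipped (as a subtype of `ℕ → EReal`) with the σ-algebra generated by the coordinate maps. -/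
def calP : Set (ℕ → EReal) :=
  {x | Antitone x ∧ (∀ n, x n ≠ ⊤) ∧ Tendsto x atTop (nhds ⊥)}

/-- `e^{θ y}`, with the convention that it is `0` when `y = -∞`, even for `θ = 0`. -/
def eexp (θ : ℝ) (y : EReal) : ℝ≥0∞ :=
  if y = ⊥ then 0 else ENNReal.ofReal (Real.exp (θ * y.toReal))

/-- `⟨x, e_θ⟩ = Σ_{n ≥ 1} e^{θ x_n}` (the sequence is indexed from `0` in Lean). -/
def ip (θ : ℝ) (x : ℕ → EReal) : ℝ≥0∞ := ∑' n, eexp θ (x n)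

/-- Condition (1.4): `∫ (1 ∧ x₁²) Λ(dx) < ∞`, with `1 ∧ x₁² = 1` when `x₁ = -∞`. -/
def cond14 (Λ : Measure calP) : Prop :=
  ∫⁻ x : calP, (if x.1 0 = ⊥ then 1
    else 1 ⊓ ENNReal.ofReal ((x.1 0).toReal ^ 2)) ∂Λ < ∞

/-- Condition (1.5): `∫ (1_{x₁>1} e^{θ x₁} + Σ_{k≥2} e^{θ x_k}) Λ(dx) < ∞`. -/
def cond15 (θ : ℝ) (Λ : Measure calP) : Prop :=
  ∫⁻ x : calP, ((if (1 : EReal) < x.1 0 then eexp θ (x.1 0) else 0)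
    + ∑' k, eexp θ (x.1 (k + 1))) ∂Λ < ∞

lemma meas_eexp (θ : ℝ) : Measurable (eexp θ) := by
  unfold eexp
  exact Measurable.ite (measurableSet_singleton ⊥) measurable_const
    (ENNReal.measurable_ofReal.comp
      (Real.measurable_exp.comp (Measurable.const_mul measurable_ereal_toReal θ)))

lemma eexp_le (θ r : ℝ) (hθ : 0 ≤ θ) (y : EReal) (hy : y ≤ (r : EReal)) :
    eexp θ y ≤ ENNReal.ofReal (Real.exp (θ * r)) := by
  unfold eexp
  split
  · exact zero_le
  · rename_i h
    apply ENNReal.ofReal_le_ofReal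
    apply Real.exp_le_exp.2
    apply mul_le_mul_of_nonneg_left _ hθ
    have := EReal.toReal_le_toReal hy h (EReal.coe_ne_top r)
    simpa using this

lemma ip_split (θ : ℝ) (x : ℕ → EReal) :
    ip θ x = eexp θ (x 0) + ∑' k, eexp θ (x (k + 1)) :=
  tsum_eq_zero_add' ENNReal.summable

/-- for every `b > 1`, `∫_{⟨x,e_θ⟩ > b} ⟨x,e_θ⟩ Λ(dx) < ∞`, i.e. the measure
`Λ̂(dx) = ⟨x,e_θ⟩ Λ(dx)` satisfies `Λ̂(⟨x,e_θ⟩ > b) < ∞`. -/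
theorem stmt3 (θ : ℝ) (hθ : 0 ≤ θ) (Λ : Measure calP) [SigmaFinite Λ]
    (h14 : cond14 Λ) (h15 : cond15 θ Λ) :
    ∀ b : ℝ, 1 < b →
      ∫⁻ x : calP in {x : calP | ENNReal.ofReal b < ip θ x.1}, ip θ x.1 ∂Λ < ∞ := by
  intro b hb
  have hco : ∀ n, Measurable fun x : calP => x.1 n := fun n =>
    (measurable_pi_apply n).comp measurable_subtype_coe
  set f : calP → ℝ≥0∞ := fun x => eexp θ (x.1 0) with hf_def
  set g : calP → ℝ≥0∞ := fun x => ∑' k, eexp θ (x.1 (k + 1)) with hg_def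
  set h1 : calP → ℝ≥0∞ := fun x => if (1 : EReal) < x.1 0 then eexp θ (x.1 0) else 0
    with hh1_def
  have hf : Measurable f := (meas_eexp θ).comp (hco 0)
  have hg : Measurable g := Measurable.ennreal_tsum fun k => (meas_eexp θ).comp (hco (k + 1))
  have hh1 : Measurable h1 := Measurable.ite
      (measurableSet_lt measurable_const (hco 0)) hf measurable_const
  have hsplit : ∀ x : calP, ip θ x.1 = f x + g x := fun x => ip_split θ x.1
  -- integrability pieces from cond15
  have hI15 : ∫⁻ x : calP, (h1 x + g x) ∂Λ < ∞ := h15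
  have hgI : ∫⁻ x : calP, g x ∂Λ < ∞ :=
    (lintegral_mono fun x => (le_add_self : g x ≤ h1 x + g x)).trans_lt hI15
  have hh1I : ∫⁻ x : calP, h1 x ∂Λ < ∞ :=
    (lintegral_mono fun x => (le_self_add : h1 x ≤ h1 x + g x)).trans_lt hI15
  -- choose ε with exp (θ ε) < b
  have hlogb : 0 < Real.log b := Real.log_pos hb
  have hθ1 : (0:ℝ) < θ + 1 := by linarith
  obtain ⟨ε, hε, hcb⟩ : ∃ ε : ℝ, 0 < ε ∧ Real.exp (θ * ε) < b := by
    refine ⟨Real.log b / (θ + 1), div_pos hlogb hθ1, ?_⟩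
    have heq : θ * (Real.log b / (θ + 1)) = θ / (θ + 1) * Real.log b := by ring
    have hlt : θ / (θ + 1) < 1 := (div_lt_one hθ1).2 (by linarith)
    have : θ * (Real.log b / (θ + 1)) < Real.log b := by
      rw [heq]
      calc θ / (θ + 1) * Real.log b < 1 * Real.log b :=
            mul_lt_mul_of_pos_right hlt hlogb
        _ = Real.log b := one_mul _
    calc Real.exp (θ * (Real.log b / (θ + 1))) < Real.exp (Real.log b) :=
          Real.exp_lt_exp.2 this
      _ = b := Real.exp_log (by linarith)
  set c : ℝ := Real.exp (θ * ε) with hc_def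
  have hcpos : 0 < c := Real.exp_pos _
  set δ : ℝ := b - c with hδ_def
  have hδ : 0 < δ := by simp only [hδ_def]; linarith
  set S : Set calP := {x : calP | ENNReal.ofReal b < ip θ x.1} with hS_def
  set S1 : Set calP := {x : calP | (ε : EReal) < x.1 0} with hS1_def
  set S2 : Set calP := {x : calP | ENNReal.ofReal δ < g x} with hS2_def
  have hS1m : MeasurableSet S1 := measurableSet_lt measurable_const (hco 0)
  have hsub : S ⊆ S1 ∪ S2 := by
    intro x hx
    by_cases h0 : (ε : EReal) < x.1 0
    · exact Or.inl h0
    · right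
      push_neg at h0
      have hfb : f x ≤ ENNReal.ofReal c := eexp_le θ ε hθ _ h0
      have hlt : ENNReal.ofReal b < ENNReal.ofReal c + g x :=
        calc ENNReal.ofReal b < ip θ x.1 := hx
          _ = f x + g x := hsplit x
          _ ≤ ENNReal.ofReal c + g x := add_le_add hfb le_rfl
      have hbd : ENNReal.ofReal b = ENNReal.ofReal c + ENNReal.ofReal δ := by
        rw [← ENNReal.ofReal_add hcpos.le hδ.le]
        congr 1
        simp only [hδ_def]; ring
      rw [hbd] at hlt
      exact (ENNReal.add_lt_add_iff_left ENNReal.ofReal_ne_top).1 hlt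
  -- Λ S1 < ∞
  set m : ℝ≥0∞ := 1 ⊓ ENNReal.ofReal (ε ^ 2) with hm_def
  have hm0 : m ≠ 0 :=
    (lt_inf_iff.2 ⟨zero_lt_one, ENNReal.ofReal_pos.2 (pow_pos hε 2)⟩).ne'
  have hmS1 : m * Λ S1 ≤ ∫⁻ x : calP, (if x.1 0 = ⊥ then 1
      else 1 ⊓ ENNReal.ofReal ((x.1 0).toReal ^ 2)) ∂Λ := by
    rw [← setLIntegral_const S1 m]
    refine le_trans (setLIntegral_mono' hS1m fun x hx => ?_)
      (setLIntegral_le_lintegral _ _)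
    have hxε : (ε : EReal) < x.1 0 := hx
    have hbot : x.1 0 ≠ ⊥ := fun h => by
      rw [h] at hxε; exact absurd hxε (not_lt.2 bot_le)
    have htop : x.1 0 ≠ ⊤ := x.2.2.1 0
    rw [if_neg hbot]
    have hεle : ε ≤ (x.1 0).toReal := by
      have := EReal.toReal_le_toReal hxε.le (EReal.coe_ne_bot ε) htop
      simpa using this
    exact inf_le_inf le_rfl
      (ENNReal.ofReal_le_ofReal (pow_le_pow_left₀ hε.le hεle 2))
  have hS1fin : Λ S1 < ∞ := by
    by_contra h
    rw [not_lt, top_le_iff] at h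
    rw [h, ENNReal.mul_top hm0] at hmS1
    exact absurd (top_le_iff.1 hmS1) h14.ne
  -- Λ S2 < ∞
  have hδ0 : ENNReal.ofReal δ ≠ 0 := (ENNReal.ofReal_pos.2 hδ).ne'
  have hmS2 : ENNReal.ofReal δ * Λ S2 ≤ ∫⁻ x : calP, g x ∂Λ := by
    rw [← setLIntegral_const S2 (ENNReal.ofReal δ)]
    refine le_trans (setLIntegral_mono' (measurableSet_lt measurable_const hg)
      fun x hx => ?_) (setLIntegral_le_lintegral _ _)
    exact (le_of_lt hx)
  have hS2fin : Λ S2 < ∞ := by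
    by_contra h
    rw [not_lt, top_le_iff] at h
    rw [h, ENNReal.mul_top hδ0] at hmS2
    exact absurd (top_le_iff.1 hmS2) hgI.ne
  have hSfin : Λ S < ∞ :=
    ((measure_mono hsub).trans (measure_union_le S1 S2)).trans_lt
      (ENNReal.add_lt_top.2 ⟨hS1fin, hS2fin⟩)
  -- final computation
  have hfb : ∀ x : calP, f x ≤ h1 x + ENNReal.ofReal (Real.exp θ) := by
    intro x
    by_cases h : (1 : EReal) < x.1 0
    · simp only [hh1_def, if_pos h]
      exact le_self_add
    · push_neg at h
      simp only [hh1_def, if_neg (not_lt.2 h), zero_add]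
      have : x.1 0 ≤ ((1 : ℝ) : EReal) := by
        simpa using h
      have := eexp_le θ 1 hθ _ this
      simpa [mul_one] using this
  calc ∫⁻ x : calP in S, ip θ x.1 ∂Λ
      = ∫⁻ x : calP in S, (f x + g x) ∂Λ := lintegral_congr fun x => hsplit x
    _ ≤ ∫⁻ x : calP in S, ((h1 x + ENNReal.ofReal (Real.exp θ)) + g x) ∂Λ :=
        lintegral_mono fun x => add_le_add (hfb x) le_rfl
    _ = (∫⁻ x : calP in S, h1 x ∂Λ + ENNReal.ofReal (Real.exp θ) * Λ S)
        + ∫⁻ x : calP in S, g x ∂Λ := by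
        rw [lintegral_add_right _ hg, lintegral_add_right _ measurable_const,
          setLIntegral_const]
    _ ≤ (∫⁻ x : calP, h1 x ∂Λ + ENNReal.ofReal (Real.exp θ) * Λ S)
        + ∫⁻ x : calP, g x ∂Λ := by
        gcongr <;> exact Measure.restrict_le_self
    _ < ∞ := by
        refine ENNReal.add_lt_top.2 ⟨ENNReal.add_lt_top.2 ⟨hh1I, ?_⟩, hgI⟩
        exact ENNReal.mul_lt_top ENNReal.ofReal_lt_top hSfin
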